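/- Under interval uncertainty, the Two-Stage Selection problem satisfies opt₁ = ∑ of the p smallest values of ĉ_e := min{C_e, c̄_e}. Specifically, if Z is a set of p items minimizing ∑_{e∈Z} ĉ_e, and we set X = {e ∈ Z : C_e ≤ c̄_e}, then X is an optimal first-stage solution with max_{S∈U^I} f₁(X,S) = ∑_{e∈Z} ĉ_e, and no first-stage solution achieves a smaller worst-case cost. -/
import Mathlib


open Finset

theorem two_stage_interval_opt {α : Type*} [DecidableEq α] (E : Finset α)
    (C cbar : α → ℝ) (hC : ∀ e ∈ E, 0 ≤ C e) (hcb : ∀ e ∈ E, 0 ≤ cbar e)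
    (p : ℕ) (hp1 : 1 ≤ p) (hpn : p ≤ E.card)
    (Z : Finset α) (hZE : Z ⊆ E) (hZ : Z.card = p)
    (hZopt : ∀ Z' ⊆ E, Z'.card = p →
      ∑ e ∈ Z, min (C e) (cbar e) ≤ ∑ e ∈ Z', min (C e) (cbar e)) :
    IsLeast
      {v : ℝ | ∃ X ⊆ E, X.card ≤ p ∧ ∃ Y ⊆ E \ X, Y.card = p - X.card ∧
        v = ∑ e ∈ X, C e + ∑ e ∈ Y, cbar e}
      (∑ e ∈ Z, min (C e) (cbar e)) ∧
    ∃ Y ⊆ E \ (Z.filter (fun e => C e ≤ cbar e)),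
      Y.card = p - (Z.filter (fun e => C e ≤ cbar e)).card ∧
      ∑ e ∈ Z.filter (fun e => C e ≤ cbar e), C e + ∑ e ∈ Y, cbar e =
        ∑ e ∈ Z, min (C e) (cbar e) := by
  set X := Z.filter (fun e => C e ≤ cbar e) with hX
  set Y := Z.filter (fun e => ¬ C e ≤ cbar e) with hY
  have hYsub : Y ⊆ E \ X := by
    intro e he
    simp only [hY, mem_filter] at he
    simp only [mem_sdiff, hX, mem_filter]
    exact ⟨hZE he.1, fun h => he.2 h.2⟩
  have hcards : X.card + Y.card = p := by
    rw [hX, hY, card_filter_add_card_filter_not, hZ]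
  have hYcard : Y.card = p - X.card := by omega
  have hsum : ∑ e ∈ X, C e + ∑ e ∈ Y, cbar e = ∑ e ∈ Z, min (C e) (cbar e) := by
    rw [← Finset.sum_filter_add_sum_filter_not Z (fun e => C e ≤ cbar e)
      (fun e => min (C e) (cbar e))]
    congr 1
    · exact Finset.sum_congr rfl fun e he => (min_eq_left (mem_filter.mp he).2).symm
    · exact Finset.sum_congr rfl fun e he =>
        (min_eq_right (le_of_lt (lt_of_not_ge (mem_filter.mp he).2))).symm
  refine ⟨⟨⟨X, fun e he => hZE (mem_filter.mp he).1, by omega, Y, hYsub, hYcard, hsum.symm⟩, ?_⟩,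
    Y, hYsub, hYcard, hsum⟩
  rintro v ⟨X', hX'E, hX'p, Y', hY'E, hY'card, rfl⟩
  have hdisj : Disjoint X' Y' := by
    refine disjoint_left.mpr fun e heX heY => ?_
    exact (mem_sdiff.mp (hY'E heY)).2 heX
  have hZ'E : X' ∪ Y' ⊆ E := union_subset hX'E (hY'E.trans sdiff_subset)
  have hZ'card : (X' ∪ Y').card = p := by
    rw [card_union_of_disjoint hdisj]; omega
  calc ∑ e ∈ Z, min (C e) (cbar e) ≤ ∑ e ∈ X' ∪ Y', min (C e) (cbar e) :=
        hZopt _ hZ'E hZ'card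
    _ = ∑ e ∈ X', min (C e) (cbar e) + ∑ e ∈ Y', min (C e) (cbar e) :=
        sum_union hdisj
    _ ≤ ∑ e ∈ X', C e + ∑ e ∈ Y', cbar e := by
        gcongr with e he
        exacts [min_le_left _ _, min_le_right _ _]
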